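/- With admissible shape functions (Ψ₀,Ψ₁) and F₀ as the basic triangular interpolation, along the edge point x_t = t pᵢ + (1−t) pⱼ (0 ≤ t ≤ 1) one has F₀(x_t) = Ψ₀(t)fᵢ + Ψ₁(t)(1−t)Aᵢ(pⱼ−pᵢ) + Ψ₀(1−t)fⱼ + Ψ₁(1−t) t Aⱼ(pᵢ−pⱼ). -/
import Mathlib


/-- The 2×2 determinant det[u,v]. -/
def det2 (u v : Fin 2 → ℝ) : ℝ := u 0 * v 1 - u 1 * v 0

/-- Barycentric weight λᵢ of the triangle with vertices p 0, p 1, p 2. -/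
noncomputable def bary (p : Fin 3 → Fin 2 → ℝ) (i : Fin 3) (x : Fin 2 → ℝ) : ℝ :=
  det2 (x - p (i + 1)) (x - p (i + 2)) / det2 (p i - p (i + 1)) (p i - p (i + 2))

lemma fin3_mk_two (h : 2 < 3) : (⟨2, h⟩ : Fin 3) = 2 := rfl

lemma sum3' {M : Type*} [AddCommMonoid M] (g : Fin 3 → M) (i : Fin 3) :
    ∑ m, g m = g i + g (i+1) + g (i+2) := by
  fin_cases i <;> simp [Fin.sum_univ_three] <;> abel

lemma sum3 (g : Fin 3 → ℝ) (i j k : Fin 3) (hij : i ≠ j) (hik : i ≠ k) (hjk : j ≠ k) :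
    ∑ m, g m = g i + g j + g k := by
  fin_cases i <;> fin_cases j <;> fin_cases k <;> simp_all [Fin.sum_univ_three] <;> ring

lemma det_ne (p : Fin 3 → Fin 2 → ℝ) (hp : AffineIndependent ℝ p) (i : Fin 3) :
    det2 (p i - p (i + 1)) (p i - p (i + 2)) ≠ 0 := by
  intro h
  set u := p i - p (i+1) with hu
  set v := p i - p (i+2) with hv
  obtain ⟨a, b, hab, hne⟩ : ∃ a b : ℝ, a • u + b • v = 0 ∧ (a ≠ 0 ∨ b ≠ 0) := by
    by_cases h0 : u = 0
    · exact ⟨1, 0, by simp [h0], Or.inl one_ne_zero⟩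
    · have hc : u 0 ≠ 0 ∨ u 1 ≠ 0 := by
        by_contra hc; push_neg at hc; apply h0; funext n; fin_cases n <;> simp [hc.1, hc.2]
      simp only [det2] at h
      rcases hc with h1 | h1
      · refine ⟨v 0, -(u 0), ?_, Or.inr (neg_ne_zero.2 h1)⟩
        funext n
        fin_cases n <;> simp [Pi.add_apply, Pi.smul_apply, smul_eq_mul] <;> nlinarith [h]
      · refine ⟨v 1, -(u 1), ?_, Or.inr (neg_ne_zero.2 h1)⟩
        funext n
        fin_cases n <;> simp [Pi.add_apply, Pi.smul_apply, smul_eq_mul] <;> nlinarith [h]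
  have hii1 : i ≠ i + 1 := by fin_cases i <;> decide
  have hii2 : i ≠ i + 2 := by fin_cases i <;> decide
  have hi12 : i + 1 ≠ i + 2 := by fin_cases i <;> decide
  set w : Fin 3 → ℝ := fun m => if m = i then a + b else if m = i + 1 then -a else -b with hw
  have hsum : ∑ m, w m = 0 := by
    rw [sum3' w i]
    simp only [hw, if_pos rfl, if_neg hii1.symm, if_neg hii2.symm, if_neg hi12.symm,
      eq_self_iff_true, if_true]
    ring
  have hsum2 : ∑ m, w m • p m = 0 := by
    rw [sum3' (fun m => w m • p m) i]
    simp only [hw, if_pos rfl, if_neg hii1.symm, if_neg hii2.symm, if_neg hi12.symm,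
      eq_self_iff_true, if_true]
    have : (a + b) • p i + (-a) • p (i+1) + (-b) • p (i+2) = a • u + b • v := by
      rw [hu, hv]; module
    rw [this, hab]
  have := affineIndependent_iff.1 hp Finset.univ w hsum hsum2
  have ha : a = 0 := by have := this (i+1) (Finset.mem_univ _); simpa [hw, hii1.symm] using this
  have hb : b = 0 := by
    have := this (i+2) (Finset.mem_univ _); simpa [hw, hii2.symm, hi12.symm] using this
  rcases hne with h' | h' <;> exact h' (by assumption)

lemma bary_edge (p : Fin 3 → Fin 2 → ℝ) (hp : AffineIndependent ℝ p) (i j : Fin 3)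
    (hij : i ≠ j) (t : ℝ) : bary p i (t • p i + (1-t) • p j) = t := by
  have hD := det_ne p hp i
  fin_cases i <;> fin_cases j <;>
    first
    | exact absurd rfl hij
    | (simp only [bary, det2, Pi.add_apply, Pi.sub_apply, Pi.smul_apply, smul_eq_mul,
        Fin.isValue, Fin.mk_zero, Fin.mk_one, fin3_mk_two, Fin.reduceAdd] at hD ⊢
       rw [div_eq_iff hD]; ring)

lemma bary_edge_zero (p : Fin 3 → Fin 2 → ℝ) (i j k : Fin 3)
    (hij : i ≠ j) (hik : i ≠ k) (hjk : j ≠ k) (t : ℝ) :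
    bary p k (t • p i + (1-t) • p j) = 0 := by
  fin_cases i <;> fin_cases j <;> fin_cases k <;>
    first
    | exact absurd rfl hij
    | exact absurd rfl hik
    | exact absurd rfl hjk
    | (simp only [bary, det2, Pi.add_apply, Pi.sub_apply, Pi.smul_apply, smul_eq_mul,
        Fin.isValue, Fin.mk_zero, Fin.mk_one, fin3_mk_two, Fin.reduceAdd]
       rw [div_eq_zero_iff]; left; ring)

/-- Along the edge point x_t = t pᵢ + (1−t) pⱼ, the basic interpolation F₀ satisfies
F₀(x_t) = Ψ₀(t)fᵢ + Ψ₁(t)(1−t)Aᵢ(pⱼ−pᵢ) + Ψ₀(1−t)fⱼ + Ψ₁(1−t)t Aⱼ(pᵢ−pⱼ). -/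
theorem stmt16 (p : Fin 3 → Fin 2 → ℝ) (hp : AffineIndependent ℝ p)
    (Ψ₀ Ψ₁ : ℝ → ℝ) (hΨ₀ : ContDiff ℝ 1 Ψ₀) (hΨ₁ : ContDiff ℝ 1 Ψ₁)
    (h₀0 : Ψ₀ 0 = 0) (h₀d0 : deriv Ψ₀ 0 = 0) (h₁0 : Ψ₁ 0 = 0) (h₁d0 : deriv Ψ₁ 0 = 0)
    (h₀d1 : deriv Ψ₀ 1 = 0) (h₀1 : Ψ₀ 1 = 1) (h₁1 : Ψ₁ 1 = 1)
    (f : Fin 3 → ℝ) (A : Fin 3 → (Fin 2 → ℝ) →L[ℝ] ℝ)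
    (i j k : Fin 3) (hij : i ≠ j) (hik : i ≠ k) (hjk : j ≠ k)
    (t : ℝ) (ht : t ∈ Set.Icc (0 : ℝ) 1) :
    (fun x => ∑ m, (Ψ₀ (bary p m x) * f m + Ψ₁ (bary p m x) * A m (x - p m)))
        (t • p i + (1 - t) • p j) =
      Ψ₀ t * f i + Ψ₁ t * (1 - t) * A i (p j - p i) +
        Ψ₀ (1 - t) * f j + Ψ₁ (1 - t) * t * A j (p i - p j) := by
  set x := t • p i + (1 - t) • p j with hx
  have hbi : bary p i x = t := bary_edge p hp i j hij t
  have hbj : bary p j x = 1 - t := by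
    have hxj : x = (1-t) • p j + (1-(1-t)) • p i := by rw [hx]; module
    rw [hxj]; exact bary_edge p hp j i (Ne.symm hij) (1-t)
  have hbk : bary p k x = 0 := bary_edge_zero p i j k hij hik hjk t
  have hxi : x - p i = (1-t) • (p j - p i) := by rw [hx]; module
  have hxj' : x - p j = t • (p i - p j) := by rw [hx]; module
  show ∑ m, (Ψ₀ (bary p m x) * f m + Ψ₁ (bary p m x) * A m (x - p m)) = _
  rw [sum3 (fun m => Ψ₀ (bary p m x) * f m + Ψ₁ (bary p m x) * A m (x - p m)) i j k
    hij hik hjk]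
  simp only [hbi, hbj, hbk, hxi, hxj', h₀0, h₁0, map_smul, smul_eq_mul]
  ring
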